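/- Let Z be a standard Gaussian and for integer q ≥ 3 let u_K = 1 − 2^{−q}, z_K = Φ⁻¹(u_K), and Q_K = E[Z | Z ≥ z_K] = 2^q·∫_{z_K}^∞ z·φ(z) dz. Then Q_K − z_K = 2^q·∫_{z_K}^∞ (z − z_K)·φ(z) dz, and asymptotically Q_K − z_K ≤ 7.5·q^{−1/2} for q ≥ 3 sufficiently large. -/

import Mathlib

open Real MeasureTheory

noncomputable def phi (z : ℝ) : ℝ := (Real.sqrt (2 * Real.pi))⁻¹ * Real.exp (-z ^ 2 / 2)

noncomputable def Phi (z : ℝ) : ℝ := ∫ s in Set.Iic z, phi s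

open Filter Set
set_option maxHeartbeats 1000000

lemma phi_pos (z : ℝ) : 0 < phi z := by
  have : (0:ℝ) < Real.sqrt (2 * Real.pi) := Real.sqrt_pos.2 (by positivity)
  exact mul_pos (inv_pos.2 this) (Real.exp_pos _)

lemma phi_eq (z : ℝ) : phi z = (Real.sqrt (2 * Real.pi))⁻¹ * Real.exp (-(1/2) * z ^ 2) := by
  unfold phi; ring_nf

lemma continuous_phi : Continuous phi := by
  unfold phi
  exact continuous_const.mul ((continuous_pow 2).neg.div_const 2).rexp

lemma integrable_phi : Integrable phi := by
  have h := (integrable_exp_neg_mul_sq (show (0:ℝ) < 1/2 by norm_num)).const_mul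
    ((Real.sqrt (2 * Real.pi))⁻¹)
  exact h.congr (Eventually.of_forall fun s => by rw [phi_eq])

lemma integrable_id_mul_phi : Integrable (fun s => s * phi s) := by
  have h := (integrable_mul_exp_neg_mul_sq (show (0:ℝ) < 1/2 by norm_num)).const_mul
    ((Real.sqrt (2 * Real.pi))⁻¹)
  exact h.congr (Eventually.of_forall fun s => by simp only [phi_eq]; ring)

lemma phi_hasDerivAt (x : ℝ) : HasDerivAt phi (-x * phi x) x := by
  have h1 : HasDerivAt (fun z : ℝ => -z ^ 2 / 2) (-x) x := by
    have h := ((hasDerivAt_pow 2 x).neg).div_const 2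
    exact h.congr_deriv (by push_cast; ring)
  have := (h1.exp).const_mul ((Real.sqrt (2 * Real.pi))⁻¹)
  exact this.congr_deriv (by unfold phi; ring)

lemma tendsto_phi_atTop : Tendsto phi atTop (nhds 0) := by
  have h1 : Tendsto (fun z : ℝ => -z ^ 2 / 2) atTop atBot := by
    apply Tendsto.atBot_div_const (by norm_num : (0:ℝ) < 2)
    exact tendsto_neg_atTop_atBot.comp (tendsto_pow_atTop two_ne_zero)
  have h2 := (Real.tendsto_exp_atBot.comp h1).const_mul ((Real.sqrt (2 * Real.pi))⁻¹)
  rw [mul_zero] at h2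
  unfold phi
  exact h2

lemma integral_phi : ∫ s, phi s = 1 := by
  have h : ∫ s, phi s = (Real.sqrt (2 * Real.pi))⁻¹ * ∫ s : ℝ, Real.exp (-(1/2) * s ^ 2) := by
    rw [← integral_const_mul]
    exact integral_congr_ae (Eventually.of_forall fun s => by rw [phi_eq])
  rw [h, integral_gaussian]
  have : Real.sqrt (π / (1/2)) = Real.sqrt (2 * π) := by norm_num [mul_comm]
  rw [this, inv_mul_cancel₀ (ne_of_gt (Real.sqrt_pos.2 (by positivity)))]

lemma integral_phi_Ici (a : ℝ) : ∫ s in Set.Ici a, phi s = 1 - Phi a := by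
  have := intervalIntegral.integral_Iic_add_Ioi (f := phi) (b := a) (μ := volume)
    integrable_phi.integrableOn integrable_phi.integrableOn
  rw [MeasureTheory.integral_Ici_eq_integral_Ioi]
  rw [integral_phi] at this
  unfold Phi; linarith

lemma integral_id_mul_phi (a : ℝ) : ∫ s in Set.Ici a, s * phi s = phi a := by
  rw [MeasureTheory.integral_Ici_eq_integral_Ioi]
  have h := integral_Ioi_of_hasDerivAt_of_tendsto' (f := fun s => -phi s)
    (f' := fun s => s * phi s) (a := a) (m := 0)
    (fun x _ => ((phi_hasDerivAt x).neg).congr_deriv (by ring))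
    integrable_id_mul_phi.integrableOn
    (by simpa using tendsto_phi_atTop.neg)
  rw [h]; ring


lemma tail_lb2 {t : ℝ} (ht : 0 ≤ t) : phi (t + 1) ≤ ∫ s in Set.Ici t, phi s := by
  have h1 : ∫ s in Set.Ioc t (t+1), phi s ≤ ∫ s in Set.Ici t, phi s := by
    apply setIntegral_mono_set integrable_phi.integrableOn
      (Eventually.of_forall fun s => (phi_pos s).le)
    exact Eventually.of_forall (fun s hs => hs.1.le)
  refine le_trans ?_ h1
  have h2 : phi (t+1) * (volume (Set.Ioc t (t+1))).toReal ≤ ∫ s in Set.Ioc t (t+1), phi s := by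
    show phi (t+1) * volume.real _ ≤ _
    apply setIntegral_ge_of_const_le_real measurableSet_Ioc (by simp)
    · intro x hx
      unfold phi
      apply mul_le_mul_of_nonneg_left _ (by positivity)
      apply Real.exp_le_exp.2
      have hx0 : 0 ≤ x := le_trans ht hx.1.le
      have : x ^ 2 ≤ (t+1) ^ 2 := by nlinarith [hx.2, hx.1.le]
      linarith
    · exact integrable_phi.integrableOn
  have hv : (volume (Set.Ioc t (t+1))).toReal = 1 := by
    rw [Real.volume_Ioc]
    norm_num
  rw [hv, mul_one] at h2
  exact h2

lemma tail_lb {a : ℝ} (ha : 2 ≤ a) :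
    phi a * (a⁻¹ - (a ^ 3)⁻¹) ≤ ∫ s in Set.Ici a, phi s := by
  have ha0 : (0:ℝ) < a := by linarith
  -- integrability of the comparison function
  have hmeas : AEStronglyMeasurable (fun s : ℝ => phi s * (1 - 3 / s ^ 4)) volume :=
    (continuous_phi.measurable.mul
      (measurable_const.sub (measurable_const.div (measurable_id.pow_const 4)))).aestronglyMeasurable
  have hint : IntegrableOn (fun s : ℝ => phi s * (1 - 3 / s ^ 4)) (Set.Ioi a) := by
    apply Integrable.mono (integrable_phi.integrableOn (s := Set.Ioi a)) hmeas.restrict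
    filter_upwards [ae_restrict_mem measurableSet_Ioi] with s hs
    have hs2 : (2:ℝ) ≤ s := le_trans ha (le_of_lt hs)
    have h4 : (3:ℝ) / s ^ 4 ≤ 1 := by
      rw [div_le_one (by positivity)]
      calc (3:ℝ) ≤ 2 ^ 4 := by norm_num
      _ ≤ s ^ 4 := pow_le_pow_left₀ (by norm_num) hs2 4
    have h40 : (0:ℝ) ≤ 3 / s ^ 4 := by positivity
    rw [Real.norm_eq_abs, Real.norm_eq_abs, abs_of_nonneg (phi_pos s).le,
      abs_of_nonneg (by nlinarith [phi_pos s] : (0:ℝ) ≤ phi s * (1 - 3 / s ^ 4))]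
    nlinarith [phi_pos s]
  -- derivative computation
  have hderiv : ∀ x ∈ Set.Ici a,
      HasDerivAt (fun s : ℝ => -(phi s * (s⁻¹ - (s ^ 3)⁻¹))) (phi x * (1 - 3 / x ^ 4)) x := by
    intro x hx
    have hx0 : x ≠ 0 := by have : (2:ℝ) ≤ x := le_trans ha hx; positivity
    have hu : HasDerivAt (fun s : ℝ => s⁻¹ - (s ^ 3)⁻¹) (-(x^2)⁻¹ + 3 / x ^ 4) x := by
      have h1 : HasDerivAt (fun s : ℝ => s⁻¹) (-(x^2)⁻¹) x := by
        simpa using hasDerivAt_inv hx0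
      have h2 : HasDerivAt (fun s : ℝ => (s ^ 3)⁻¹) (-(3 * x ^ 2) / (x ^ 3) ^ 2) x :=
        (hasDerivAt_pow 3 x).inv (by positivity) |>.congr_deriv (by push_cast; ring)
      have := h1.sub h2
      exact this.congr_deriv (by field_simp; ring)
    have := ((phi_hasDerivAt x).mul hu).neg
    have h4 : x ^ 4 ≠ 0 := by positivity
    exact this.congr_deriv (by field_simp; ring)
  have hlim : Tendsto (fun s : ℝ => -(phi s * (s⁻¹ - (s ^ 3)⁻¹))) atTop (nhds 0) := by
    have h1 : Tendsto (fun s : ℝ => s⁻¹ - (s ^ 3)⁻¹) atTop (nhds 0) := by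
      have hb : Tendsto (fun s : ℝ => (s ^ 3)⁻¹) atTop (nhds 0) := by
        have hc : Tendsto (fun s : ℝ => s ^ 3) atTop atTop :=
          tendsto_pow_atTop (by norm_num)
        exact hc.inv_tendsto_atTop
      have := tendsto_inv_atTop_zero.sub hb
      simpa using this
    have := (tendsto_phi_atTop.mul h1).neg
    simpa using this
  have key := integral_Ioi_of_hasDerivAt_of_tendsto'
    (fun x hx => hderiv x hx) hint hlim
  rw [MeasureTheory.integral_Ici_eq_integral_Ioi]
  have hcomp : ∫ s in Set.Ioi a, phi s * (1 - 3 / s ^ 4) ≤ ∫ s in Set.Ioi a, phi s := by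
    apply setIntegral_mono_on hint integrable_phi.integrableOn measurableSet_Ioi
    intro s hs
    have hs0 : (0:ℝ) < s := lt_of_lt_of_le (by linarith) hs.le
    nlinarith [mul_nonneg (phi_pos s).le (show (0:ℝ) ≤ 3 / s ^ 4 by positivity)]
  rw [key] at hcomp
  simpa using hcomp

lemma Phi_mono {a b : ℝ} (h : a ≤ b) : Phi a ≤ Phi b := by
  unfold Phi
  apply setIntegral_mono_set integrable_phi.integrableOn
    (Eventually.of_forall fun s => (phi_pos s).le)
  exact Eventually.of_forall (Set.Iic_subset_Iic.2 h)

lemma two_zpow_eq (q : ℕ) : (2:ℝ) ^ (-(q:ℤ)) = ((2:ℝ) ^ q)⁻¹ := by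
  rw [zpow_neg, zpow_natCast]

lemma mem_Ioo_aux {q : ℕ} (hq : 3 ≤ q) : (1 - (2:ℝ) ^ (-(q:ℤ))) ∈ Set.Ioo (0:ℝ) 1 := by
  rw [two_zpow_eq]
  have h1 : (1:ℝ) < 2 ^ q := one_lt_pow₀ one_lt_two (by omega)
  constructor
  · have : ((2:ℝ) ^ q)⁻¹ < 1 := inv_lt_one_of_one_lt₀ h1
    linarith
  · have : (0:ℝ) < ((2:ℝ) ^ q)⁻¹ := by positivity
    linarith

lemma tail_eq_aux (Φinv : ℝ → ℝ)
    (hinv : ∀ y ∈ Set.Ioo (0 : ℝ) 1, Phi (Φinv y) = y) {q : ℕ} (hq : 3 ≤ q) :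
    ∫ s in Set.Ici (Φinv (1 - (2 : ℝ) ^ (-(q : ℤ)))), phi s = (2:ℝ) ^ (-(q:ℤ)) := by
  rw [integral_phi_Ici, hinv _ (mem_Ioo_aux hq)]
  ring

theorem last_interval_conditional_mean (Φinv : ℝ → ℝ)
    (hinv : ∀ y ∈ Set.Ioo (0 : ℝ) 1, Phi (Φinv y) = y) :
    (∀ q : ℕ, 3 ≤ q →
      (2 : ℝ) ^ q * (∫ z in Set.Ici (Φinv (1 - (2 : ℝ) ^ (-(q : ℤ)))), z * phi z) -
          Φinv (1 - (2 : ℝ) ^ (-(q : ℤ))) =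
        (2 : ℝ) ^ q *
          ∫ z in Set.Ici (Φinv (1 - (2 : ℝ) ^ (-(q : ℤ)))),
            (z - Φinv (1 - (2 : ℝ) ^ (-(q : ℤ)))) * phi z) ∧
    ∃ q₀ : ℕ, 3 ≤ q₀ ∧ ∀ q : ℕ, q₀ ≤ q →
      (2 : ℝ) ^ q * (∫ z in Set.Ici (Φinv (1 - (2 : ℝ) ^ (-(q : ℤ)))), z * phi z) -
          Φinv (1 - (2 : ℝ) ^ (-(q : ℤ))) ≤ 7.5 / Real.sqrt q := by
  constructor
  · -- Part 1: the identity
    intro q hq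
    set z := Φinv (1 - (2 : ℝ) ^ (-(q : ℤ))) with hz
    have hPq : (2:ℝ) ^ q * (2:ℝ) ^ (-(q:ℤ)) = 1 := by
      rw [two_zpow_eq]
      exact mul_inv_cancel₀ (by positivity)
    have hsub : (∫ s in Set.Ici z, (s - z) * phi s)
        = (∫ s in Set.Ici z, s * phi s) - z * (2:ℝ) ^ (-(q:ℤ)) := by
      have heq : ∀ s : ℝ, (s - z) * phi s = s * phi s - z * phi s := fun s => by ring
      simp_rw [heq]
      rw [integral_sub integrable_id_mul_phi.integrableOn
        (integrable_phi.integrableOn.const_mul z)]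
      rw [integral_const_mul, tail_eq_aux Φinv hinv hq]
    rw [hsub, mul_sub,
      show (2:ℝ)^q * (z * (2:ℝ)^(-(q:ℤ))) = z * ((2:ℝ)^q * (2:ℝ)^(-(q:ℤ))) by ring,
      hPq, mul_one]
  · -- Part 2: the bound
    refine ⟨100, by norm_num, fun q hq => ?_⟩
    have hq3 : 3 ≤ q := by omega
    set z := Φinv (1 - (2 : ℝ) ^ (-(q : ℤ))) with hzdef
    set P := (2:ℝ) ^ (-(q:ℤ)) with hPdef
    have hPpos : 0 < P := by rw [hPdef, two_zpow_eq]; positivity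
    have hPq : (2:ℝ) ^ q * P = 1 := by
      rw [hPdef, two_zpow_eq]; exact mul_inv_cancel₀ (by positivity)
    have hqR : (100:ℝ) ≤ (q:ℝ) := by exact_mod_cast hq
    have hsq : (10:ℝ) ≤ Real.sqrt q := by
      have h1 : Real.sqrt 100 ≤ Real.sqrt q := Real.sqrt_le_sqrt hqR
      have h2 : Real.sqrt 100 = 10 := by
        rw [show (100:ℝ) = 10 ^ 2 by norm_num, Real.sqrt_sq (by norm_num)]
      linarith
    have hsqq : Real.sqrt q ^ 2 = (q:ℝ) := Real.sq_sqrt (by positivity)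
    set t := Real.sqrt q / 2 with htdef
    have ht5 : (5:ℝ) ≤ t := by rw [htdef]; linarith
    -- φ(t+1) > P
    have hA : P < phi (t + 1) := by
      have hc : Real.sqrt (2 * Real.pi) ≤ 3 := by
        nlinarith [Real.sq_sqrt (show (0:ℝ) ≤ 2 * Real.pi by positivity),
          Real.sqrt_nonneg (2 * Real.pi), Real.pi_le_four]
      have hsqle : Real.sqrt q ≤ (q:ℝ) / 10 := by nlinarith
      have hX : (51:ℝ) ≤ (q:ℝ) * Real.log 2 - (t + 1) ^ 2 / 2 := by
        have hlog : (0.6931471803:ℝ) < Real.log 2 := Real.log_two_gt_d9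
        have ht2 : (t + 1) ^ 2 = (q:ℝ)/4 + Real.sqrt q + 1 := by
          rw [htdef]; nlinarith [hsqq]
        nlinarith
      have hexp : Real.sqrt (2 * Real.pi)
          < Real.exp ((q:ℝ) * Real.log 2 - (t + 1) ^ 2 / 2) := by
        have := Real.add_one_le_exp ((q:ℝ) * Real.log 2 - (t + 1) ^ 2 / 2)
        linarith
      have h2q : ((2:ℝ) ^ q) = Real.exp ((q:ℝ) * Real.log 2) := by
        rw [Real.exp_nat_mul, Real.exp_log (show (0:ℝ) < 2 by norm_num)]
      have hPval : P = Real.exp (-((q:ℝ) * Real.log 2)) := by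
        rw [hPdef, two_zpow_eq, h2q, ← Real.exp_neg]
      rw [hPval]
      unfold phi
      rw [show -(t+1)^2/2 = -((t+1)^2/2) by ring]
      rw [show Real.exp (-((t+1)^2/2)) = Real.exp ((q:ℝ) * Real.log 2 - (t+1)^2/2)
          * Real.exp (-((q:ℝ) * Real.log 2)) by rw [← Real.exp_add]; ring_nf]
      have hsp : (0:ℝ) < Real.sqrt (2 * Real.pi) := Real.sqrt_pos.2 (by positivity)
      rw [← mul_assoc]
      have hge : 1 < (Real.sqrt (2 * Real.pi))⁻¹ * Real.exp ((q:ℝ) * Real.log 2 - (t+1)^2/2) := by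
        rw [lt_inv_mul_iff₀ hsp]
        simpa using hexp
      nlinarith [Real.exp_pos (-((q:ℝ) * Real.log 2))]
    -- z ≥ t
    have hzt : t ≤ z := by
      by_contra hlt
      push_neg at hlt
      have h1 : Phi z ≤ Phi t := Phi_mono hlt.le
      have h2 : Phi z = 1 - P := hinv _ (mem_Ioo_aux hq3)
      have h3 : phi (t + 1) ≤ ∫ s in Set.Ici t, phi s := tail_lb2 (by linarith)
      have h4 : ∫ s in Set.Ici t, phi s = 1 - Phi t := integral_phi_Ici t
      linarith
    have hz5 : (5:ℝ) ≤ z := le_trans ht5 hzt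
    -- tail bounds at z
    have htail : ∫ s in Set.Ici z, phi s = P := tail_eq_aux Φinv hinv hq3
    have h3 : phi z * (z⁻¹ - (z ^ 3)⁻¹) ≤ P := htail ▸ tail_lb (by linarith)
    have hz2 : (0:ℝ) < z ^ 2 - 1 := by nlinarith
    have hz0 : (0:ℝ) < z := by linarith
    have hid : z⁻¹ - (z ^ 3)⁻¹ = (z ^ 2 - 1) / z ^ 3 := by
      field_simp
    rw [hid] at h3
    have h3' : phi z * (z ^ 2 - 1) ≤ P * z ^ 3 := by
      have hz3 : (0:ℝ) < z ^ 3 := by positivity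
      calc phi z * (z ^ 2 - 1) = phi z * ((z ^ 2 - 1) / z ^ 3) * z ^ 3 := by field_simp
        _ ≤ P * z ^ 3 := mul_le_mul_of_nonneg_right h3 hz3.le
    have step1 : phi z - P * z ≤ P * z / (z ^ 2 - 1) := by
      rw [le_div_iff₀ hz2]
      nlinarith
    rw [integral_id_mul_phi]
    have step2 : (2:ℝ) ^ q * phi z - z = (phi z - P * z) * (2:ℝ) ^ q := by
      linear_combination z * hPq
    have step3 : (phi z - P * z) * (2:ℝ) ^ q ≤ P * z / (z ^ 2 - 1) * (2:ℝ) ^ q :=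
      mul_le_mul_of_nonneg_right step1 (by positivity)
    have step4 : P * z / (z ^ 2 - 1) * (2:ℝ) ^ q = z / (z ^ 2 - 1) := by
      rw [show P * z / (z ^ 2 - 1) * (2:ℝ) ^ q = z / (z ^ 2 - 1) * ((2:ℝ) ^ q * P) by ring,
        hPq, mul_one]
    have step5 : z / (z ^ 2 - 1) ≤ 7.5 / Real.sqrt q := by
      rw [div_le_div_iff₀ hz2 (by positivity)]
      have hsz : Real.sqrt q ≤ 2 * z := by rw [htdef] at hzt; linarith
      nlinarith [mul_le_mul_of_nonneg_left hsz hz0.le]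
    linarith [step2, step3, step4 ▸ step3]
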